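/- Let each of m channels require at least 28 flips if capped and 36 flips if not capped, where capping a channel requires that at least one of its two endpoint-gadgets is unlocked at cost 2 per unlocked gadget (paid once per gadget). Then the minimum total cost over all strategies equals 28m + 8·|uncovered| + 2·|unlocked| minimized over subsets of gadgets, which is minimized by taking a minimum vertex cover of the associated graph. -/
import Mathlib


/-- `S` is a vertex cover of `G`. -/
def IsVertexCover {V : Type*} (G : SimpleGraph V) (S : Finset V) : Prop :=
  ∀ e ∈ G.edgeSet, ∃ v ∈ S, v ∈ e

/-- The number of edges (channels) with neither endpoint gadget in `L`. -/
noncomputable def uncov {V : Type*} (G : SimpleGraph V) (L : Finset V) : ℕ :=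
  {e ∈ G.edgeSet | ∀ v ∈ e, v ∉ L}.ncard

/-- Total cost when the gadgets of `L` are unlocked: 2 per unlocked gadget,
36 per uncapped channel, 28 per capped channel. -/
noncomputable def flipCost {V : Type*} (G : SimpleGraph V) (L : Finset V) : ℕ :=
  2 * L.card + 36 * uncov G L + 28 * (G.edgeSet.ncard - uncov G L)

lemma uncov_le {V : Type*} [Fintype V] [DecidableEq V] (G : SimpleGraph V)
    (L : Finset V) : uncov G L ≤ G.edgeSet.ncard := by
  apply Set.ncard_le_ncard
  · intro e he; exact he.1
  · exact G.edgeSet.toFinite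

/-- There is a vertex cover of size ≤ |L| + 2·uncov. -/
lemma cover_of_L {V : Type*} [Fintype V] [DecidableEq V] (G : SimpleGraph V)
    (L : Finset V) : ∃ S : Finset V, IsVertexCover G S ∧
      S.card ≤ L.card + 2 * uncov G L := by
  classical
  set U : Finset (Sym2 V) :=
    G.edgeFinset.filter (fun e => ∀ v ∈ e, v ∉ L) with hU
  have hUset : {e ∈ G.edgeSet | ∀ v ∈ e, v ∉ L} = ↑U := by
    ext e
    simp [hU, SimpleGraph.mem_edgeFinset, Set.mem_setOf_eq]
  have huncov : uncov G L = U.card := by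
    rw [uncov, hUset, Set.ncard_coe_finset]
  refine ⟨L ∪ U.biUnion (fun e => {e.out.1, e.out.2}), ?_, ?_⟩
  · intro e he
    by_cases h : ∃ v ∈ L, v ∈ e
    · obtain ⟨v, hv, hve⟩ := h
      exact ⟨v, Finset.mem_union_left _ hv, hve⟩
    · push_neg at h
      have heU : e ∈ U := by
        simp only [hU, Finset.mem_filter, SimpleGraph.mem_edgeFinset]
        exact ⟨he, fun v hv hvL => h v hvL hv⟩
      refine ⟨e.out.1, Finset.mem_union_right _ ?_, Sym2.out_fst_mem e⟩
      exact Finset.mem_biUnion.2 ⟨e, heU, by simp⟩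
  · calc (L ∪ U.biUnion (fun e => {e.out.1, e.out.2})).card
        ≤ L.card + (U.biUnion (fun e => {e.out.1, e.out.2})).card :=
          Finset.card_union_le _ _
      _ ≤ L.card + ∑ e ∈ U, ({e.out.1, e.out.2} : Finset V).card := by
          gcongr; exact Finset.card_biUnion_le
      _ ≤ L.card + ∑ _e ∈ U, 2 := by
          gcongr with e _; exact Finset.card_insert_le _ _ |>.trans (by simp)
      _ = L.card + 2 * uncov G L := by
          rw [Finset.sum_const, smul_eq_mul, huncov, mul_comm]

/-- With `m` channels (edges), the cost of unlocking `L` equals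
`28m + 8·|uncovered| + 2·|unlocked|`, and its minimum over all subsets `L` of
gadgets is `2·τ(G) + 28m`, attained by a minimum vertex cover, where `τ(G)` is
the minimum vertex cover size. -/
theorem stmt18 {V : Type*} [Fintype V] [DecidableEq V] (G : SimpleGraph V) :
    (∀ L : Finset V, flipCost G L =
        28 * G.edgeSet.ncard + 8 * uncov G L + 2 * L.card) ∧
    IsLeast {c : ℕ | ∃ L : Finset V, c = flipCost G L}
      (2 * sInf {m : ℕ | ∃ S : Finset V, IsVertexCover G S ∧ S.card = m} +
        28 * G.edgeSet.ncard) := by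
  classical
  have hform : ∀ L : Finset V, flipCost G L =
      28 * G.edgeSet.ncard + 8 * uncov G L + 2 * L.card := by
    intro L
    have h := uncov_le G L
    rw [flipCost]
    omega
  refine ⟨hform, ?_, ?_⟩
  · -- membership: a minimum vertex cover attains the value
    have hne : {m : ℕ | ∃ S : Finset V, IsVertexCover G S ∧ S.card = m}.Nonempty := by
      refine ⟨(Finset.univ : Finset V).card, Finset.univ, ?_, rfl⟩
      intro e _
      exact ⟨e.out.1, Finset.mem_univ _, Sym2.out_fst_mem e⟩
    obtain ⟨S, hScov, hScard⟩ := Nat.sInf_mem hne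
    refine ⟨S, ?_⟩
    have huz : uncov G S = 0 := by
      rw [uncov, Set.ncard_eq_zero (by
        exact (G.edgeSet.toFinite).subset (fun e he => he.1))]
      ext e
      simp only [Set.mem_setOf_eq, Set.mem_empty_iff_false, iff_false, not_and,
        not_forall]
      intro he
      obtain ⟨v, hvS, hve⟩ := hScov e he
      exact ⟨v, hve, by simp [hvS]⟩
    rw [hform S, huz, hScard]
    ring
  · -- lower bound
    rintro c ⟨L, rfl⟩
    obtain ⟨S, hScov, hScard⟩ := cover_of_L G L
    have hτ : sInf {m : ℕ | ∃ S : Finset V, IsVertexCover G S ∧ S.card = m}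
        ≤ S.card := Nat.sInf_le ⟨S, hScov, rfl⟩
    rw [hform L]
    omega
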